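/- Let q be even, and let (G, [·,·]) be an ε-dimensional non-degenerate symmetric bilinear space over F_q in which [c,c] = 0 for every c in the hyperplane V_0 = {c : Σ_i c_i = 0}. If ε is odd, then the number of self-orthogonal subspaces of G equals Σ_{k=0}^{(ε−1)/2} [ (ε−1)/2 choose k ]_q ∏_{a=0}^{k−1} (q^{(ε−2a−1)/2} + 1). -/

import Mathlib

open Finset

/-- The Gaussian (Q-binomial) coefficient, defined via the q-Pascal recurrence. -/
def gaussBinom (Q : ℕ) : ℕ → ℕ → ℕ
  | _, 0 => 1
  | 0, _ + 1 => 0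
  | k + 1, b + 1 => gaussBinom Q k b + Q ^ (b + 1) * gaussBinom Q k (b + 1)

lemma gaussBinom_eq_zero (Q : ℕ) : ∀ {n k : ℕ}, n < k → gaussBinom Q n k = 0 := by
  intro n
  induction n with
  | zero => intro k hk; match k, hk with
    | k + 1, _ => rfl
  | succ m ih =>
    intro k hk
    match k, hk with
    | b + 1, hk =>
      show gaussBinom Q m b + Q ^ (b + 1) * gaussBinom Q m (b + 1) = 0
      rw [ih (by omega), ih (by omega), mul_zero, add_zero]

lemma gaussAux (Q : ℕ) (hQ : 1 ≤ Q) :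
    ∀ n k, gaussBinom Q n k * ∏ a ∈ range k, (Q ^ (a + 1) - 1)
      = ∏ a ∈ range k, (Q ^ (n - a) - 1) := by
  intro n
  induction n with
  | zero =>
    intro k
    match k with
    | 0 => simp [gaussBinom]
    | j + 1 =>
      rw [show gaussBinom Q 0 (j+1) = 0 from rfl, zero_mul]
      refine (Finset.prod_eq_zero (Finset.mem_range.2 (Nat.succ_pos j)) ?_).symm
      simp
  | succ n ih =>
    intro k
    match k with
    | 0 => simp [gaussBinom]
    | j + 1 =>
      have hR : ∏ a ∈ range (j + 1), (Q ^ (n + 1 - a) - 1)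
          = (Q ^ (n + 1) - 1) * ∏ a ∈ range j, (Q ^ (n - a) - 1) := by
        rw [Finset.prod_range_succ']
        rw [mul_comm]
        congr 1
        exact Finset.prod_congr rfl fun a _ => by congr 2; omega
      rw [hR]
      show (gaussBinom Q n j + Q ^ (j + 1) * gaussBinom Q n (j + 1)) *
        ∏ a ∈ range (j + 1), (Q ^ (a + 1) - 1) = _
      rw [Finset.prod_range_succ, add_mul]
      have e1 : gaussBinom Q n j * ((∏ a ∈ range j, (Q ^ (a + 1) - 1)) * (Q ^ (j + 1) - 1))
          = (∏ a ∈ range j, (Q ^ (n - a) - 1)) * (Q ^ (j + 1) - 1) := by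
        rw [← mul_assoc, ih j]
      have e2 : Q ^ (j + 1) * gaussBinom Q n (j + 1) *
            ((∏ a ∈ range j, (Q ^ (a + 1) - 1)) * (Q ^ (j + 1) - 1))
          = Q ^ (j + 1) * ((∏ a ∈ range j, (Q ^ (n - a) - 1)) * (Q ^ (n - j) - 1)) := by
        rw [mul_assoc (Q ^ (j+1)), ← Finset.prod_range_succ, ← Finset.prod_range_succ, ih (j+1)]
      rw [e1, e2]
      rcases le_or_gt j n with hjn | hjn
      · have h1 : Q ^ (j + 1) * (Q ^ (n - j) - 1) = Q ^ (n + 1) - Q ^ (j + 1) := by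
          rw [Nat.mul_sub, mul_one, ← pow_add]
          congr 2
          omega
        have h2 : 1 ≤ Q ^ (j + 1) := Nat.one_le_pow _ _ hQ
        have h3 : Q ^ (j + 1) ≤ Q ^ (n + 1) := Nat.pow_le_pow_right hQ (by omega)
        have e3 : Q ^ (j + 1) * ((∏ a ∈ range j, (Q ^ (n - a) - 1)) * (Q ^ (n - j) - 1))
            = (∏ a ∈ range j, (Q ^ (n - a) - 1)) * (Q ^ (n + 1) - Q ^ (j + 1)) := by
          rw [mul_left_comm, h1]
        rw [e3, ← mul_add, mul_comm]
        congr 1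
        omega
      · have hz : ∏ a ∈ range j, (Q ^ (n - a) - 1) = 0 := by
          refine Finset.prod_eq_zero (Finset.mem_range.2 hjn) ?_
          simp [Nat.sub_self]
        rw [hz]
        ring

lemma sq_sub_one' (m : ℕ) (hm : 1 ≤ m) : (m - 1) * (m + 1) = m * m - 1 := by
  match m, hm with
  | m' + 1, _ =>
    simp only [Nat.add_sub_cancel]
    exact Nat.eq_sub_of_add_eq (by ring)

lemma key_identity (Q ν k : ℕ) (hQ : 1 ≤ Q) (hk : k ≤ ν) :
    ∏ a ∈ range k, (Q ^ (2 * ν - a) - Q ^ a)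
      = gaussBinom Q ν k * (∏ a ∈ range k, (Q ^ (ν - a) + 1))
          * ∏ a ∈ range k, (Q ^ k - Q ^ a) := by
  have hL : ∏ a ∈ range k, (Q ^ (2 * ν - a) - Q ^ a)
      = (∏ a ∈ range k, Q ^ a) * (∏ a ∈ range k, (Q ^ (ν - a) - 1))
          * ∏ a ∈ range k, (Q ^ (ν - a) + 1) := by
    rw [mul_assoc, ← Finset.prod_mul_distrib, ← Finset.prod_mul_distrib]
    refine Finset.prod_congr rfl fun a ha => ?_
    have ha' : a < k := Finset.mem_range.1 ha
    have h1 : 1 ≤ Q ^ (ν - a) := Nat.one_le_pow _ _ hQ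
    rw [sq_sub_one' _ h1, Nat.mul_sub, mul_one, ← pow_add, ← pow_add]
    congr 2 <;> omega
  have hB : ∏ a ∈ range k, (Q ^ k - Q ^ a)
      = (∏ a ∈ range k, Q ^ a) * ∏ a ∈ range k, (Q ^ (a + 1) - 1) := by
    rw [show ∏ a ∈ range k, (Q ^ k - Q ^ a)
        = ∏ a ∈ range k, (Q ^ a * (Q ^ (k - a) - 1)) from
      Finset.prod_congr rfl fun a ha => by
        have ha' : a < k := Finset.mem_range.1 ha
        rw [Nat.mul_sub, mul_one, ← pow_add]
        congr 2
        omega]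
    rw [Finset.prod_mul_distrib]
    congr 1
    calc ∏ a ∈ range k, (Q ^ (k - a) - 1)
        = ∏ a ∈ range k, (Q ^ (k - 1 - a + 1) - 1) :=
          Finset.prod_congr rfl fun a ha => by
            have := Finset.mem_range.1 ha; congr 2; omega
      _ = ∏ a ∈ range k, (Q ^ (a + 1) - 1) := Finset.prod_range_reflect (fun a => Q ^ (a+1) - 1) k
  rw [hL, hB, ← gaussAux Q hQ ν k]
  ring
open Finset Module LinearMap

section X
variable {K V : Type*} [Field K] [Fintype K] [AddCommGroup V] [Module K V] [Finite V]
variable (B : LinearMap.BilinForm K V)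

def TotIso (U : Submodule K V) : Prop := ∀ x ∈ U, ∀ y ∈ U, B x y = 0

lemma totIso_iff_le_orthogonal {U : Submodule K V} :
    TotIso B U ↔ U ≤ B.orthogonal U := by
  constructor
  · intro h x hx
    exact (LinearMap.BilinForm.mem_orthogonal_iff).2 fun n hn => h n hn x hx
  · intro h x hx y hy
    exact (LinearMap.BilinForm.mem_orthogonal_iff).1 (h hy) x hx

lemma mem_orthogonal_span_iff {S : Set V} {v : V} :
    v ∈ B.orthogonal (Submodule.span K S) ↔ ∀ y ∈ S, B y v = 0 := by
  constructor
  · intro h y hy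
    exact (LinearMap.BilinForm.mem_orthogonal_iff).1 h y (Submodule.subset_span hy)
  · intro h
    refine (LinearMap.BilinForm.mem_orthogonal_iff).2 fun n hn => ?_
    have : Submodule.span K S ≤ LinearMap.ker (B.flip v) := by
      rw [Submodule.span_le]
      intro y hy
      simpa using h y hy
    simpa using this hn

lemma totIso_span_iff {S : Set V} :
    TotIso B (Submodule.span K S) ↔ ∀ x ∈ S, ∀ y ∈ S, B x y = 0 := by
  constructor
  · intro h x hx y hy
    exact h x (Submodule.subset_span hx) y (Submodule.subset_span hy)
  · intro h
    rw [totIso_iff_le_orthogonal, Submodule.span_le]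
    intro x hx
    exact (mem_orthogonal_span_iff B).2 fun y hy => h y hy x hx

lemma totIso_mono {U U' : Submodule K V} (h : U ≤ U') (h' : TotIso B U') : TotIso B U :=
  fun x hx y hy => h' x (h hx) y (h hy)

variable (halt : B.IsAlt)

/-- The step equivalence for counting isotropic tuples. -/
noncomputable def isoTupleEquiv (k : ℕ) :
    {s : Fin (k+1) → V // LinearIndependent K s ∧ TotIso B (Submodule.span K (Set.range s))} ≃
    Σ s : {s : Fin k → V // LinearIndependent K s ∧ TotIso B (Submodule.span K (Set.range s))},
      {v : V // v ∈ B.orthogonal (Submodule.span K (Set.range s.1))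
        ∧ v ∉ Submodule.span K (Set.range s.1)} where
  toFun s := ⟨⟨Fin.tail s.1,
      (linearIndependent_fin_cons.mp (by rw [Fin.cons_self_tail]; exact s.2.1)).1,
      totIso_mono B (Submodule.span_mono (by
        rw [Set.range_subset_iff]; exact fun i => Set.mem_range_self _)) s.2.2⟩,
    ⟨s.1 0,
      (mem_orthogonal_span_iff B).2 fun y hy => s.2.2 y
        (Submodule.subset_span (by
          obtain ⟨i, rfl⟩ := hy
          exact Set.mem_range_self _)) (s.1 0) (Submodule.subset_span (Set.mem_range_self _)),
      (linearIndependent_fin_cons.mp (by rw [Fin.cons_self_tail]; exact s.2.1)).2⟩⟩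
  invFun p := ⟨Fin.cons p.2.1 p.1.1,
    by
      refine ⟨linearIndependent_fin_cons.mpr ⟨p.1.2.1, p.2.2.2⟩, ?_⟩
      rw [Fin.range_cons]
      rw [totIso_span_iff]
      have hiso := (totIso_span_iff B).1 p.1.2.2
      have horth : ∀ y ∈ Set.range p.1.1, B y p.2.1 = 0 :=
        (mem_orthogonal_span_iff B).1 p.2.2.1
      rintro x (rfl | hx) y (rfl | hy)
      · exact halt _
      · exact halt.isRefl _ _ (horth y hy)
      · exact horth x hx
      · exact hiso x hx y hy⟩
  left_inv s := by
    apply Subtype.ext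
    simp [Fin.cons_self_tail]
  right_inv := fun ⟨⟨s, hs⟩, ⟨v, hv⟩⟩ => by
    simp only [Fin.cons_zero, Fin.tail_cons, Subtype.coe_eta, Sigma.mk.inj_iff, heq_eq_eq,
      and_self]
    exact ⟨trivial, HEq.rfl⟩


attribute [local instance] Fintype.ofFinite

local notation "q" => Fintype.card K

lemma card_submodule_set (U : Submodule K V) :
    (U : Set V).ncard = q ^ finrank K U := by
  rw [← Nat.card_coe_set_eq, Nat.card_eq_fintype_card]
  have : Fintype.card (U : Set V) = Fintype.card U := Fintype.card_congr (Equiv.refl _)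
  rw [this]
  exact card_eq_pow_finrank

lemma card_diff_submodule (U W : Submodule K V) (h : U ≤ W) :
    Nat.card {v : V // v ∈ W ∧ v ∉ U} = q ^ finrank K W - q ^ finrank K U := by
  have he : {v : V | v ∈ W ∧ v ∉ U} = (W : Set V) \ (U : Set V) := rfl
  have hc : Nat.card {v : V // v ∈ W ∧ v ∉ U} = ((W : Set V) \ (U : Set V)).ncard := by
    rw [← he]
    exact Nat.card_coe_set_eq _
  rw [hc, Set.ncard_diff h, card_submodule_set, card_submodule_set]

lemma card_isoTuples (hnd : B.Nondegenerate) (halt : B.IsAlt) {ν : ℕ}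
    (hdim : finrank K V = 2 * ν) :
    ∀ k, k ≤ ν →
      Nat.card {s : Fin k → V // LinearIndependent K s
          ∧ TotIso B (Submodule.span K (Set.range s))}
        = ∏ a ∈ range k, (q ^ (2 * ν - a) - q ^ a) := by
  have : FiniteDimensional K V := Module.Finite.of_finite
  intro k
  induction k with
  | zero =>
    intro _
    rw [Finset.range_zero, Finset.prod_empty]
    have hall : ∀ s : Fin 0 → V, LinearIndependent K s
        ∧ TotIso B (Submodule.span K (Set.range s)) := by
      intro s
      refine ⟨linearIndependent_empty_type, ?_⟩
      rw [Set.range_eq_empty, Submodule.span_empty]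
      intro x hx y hy
      rw [Submodule.mem_bot] at hx
      rw [hx]
      simp
    rw [Nat.card_congr (Equiv.subtypeUnivEquiv hall)]
    exact Nat.card_eq_one_iff_unique.2 ⟨⟨fun a b => funext fun i => i.elim0⟩, ⟨fun _ => 0⟩⟩
  | succ k ih =>
    intro hk
    rw [Nat.card_congr (isoTupleEquiv B halt k), Nat.card_eq_fintype_card,
      Fintype.card_sigma]
    have hfib : ∀ s : {s : Fin k → V // LinearIndependent K s
        ∧ TotIso B (Submodule.span K (Set.range s))},
        Fintype.card {v : V // v ∈ B.orthogonal (Submodule.span K (Set.range s.1))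
          ∧ v ∉ Submodule.span K (Set.range s.1)} = q ^ (2 * ν - k) - q ^ k := by
      intro s
      set U := Submodule.span K (Set.range s.1) with hUdef
      have hUk : finrank K U = k := by
        rw [hUdef, finrank_span_eq_card s.2.1, Fintype.card_fin]
      have hle : U ≤ B.orthogonal U := (totIso_iff_le_orthogonal B).1 s.2.2
      have horthrank : finrank K (B.orthogonal U) = 2 * ν - k := by
        rw [LinearMap.BilinForm.finrank_orthogonal hnd, hdim, hUk]
      rw [← Nat.card_eq_fintype_card, card_diff_submodule _ _ hle, horthrank, hUk]
    rw [Finset.sum_congr rfl fun s _ => hfib s, Finset.sum_const, Finset.card_univ,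
      ← Nat.card_eq_fintype_card, ih (by omega), Finset.prod_range_succ, smul_eq_mul]


noncomputable def basesEquiv (k : ℕ) (U : Submodule K V) (hU : finrank K U = k) :
    {s : Fin k → V // LinearIndependent K s ∧ Submodule.span K (Set.range s) = U} ≃
      {t : Fin k → U // LinearIndependent K t} where
  toFun s := ⟨fun i => ⟨s.1 i,
      (le_of_eq s.2.2) (Submodule.subset_span (Set.mem_range_self i))⟩,
    LinearIndependent.of_comp U.subtype s.2.1⟩
  invFun t := ⟨fun i => (t.1 i : V),
    by
      refine ⟨t.2.map' U.subtype (Submodule.ker_subtype U), ?_⟩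
      have htop : Submodule.span K (Set.range t.1) = ⊤ :=
        Submodule.eq_top_of_finrank_eq
          (by rw [finrank_span_eq_card t.2, Fintype.card_fin, hU])
      have : Set.range (fun i => (t.1 i : V)) = U.subtype '' Set.range t.1 := by
        rw [← Set.range_comp]
        rfl
      rw [this, ← Submodule.map_span, htop, Submodule.map_subtype_top]⟩
  left_inv s := by
    apply Subtype.ext
    rfl
  right_inv t := by
    apply Subtype.ext
    funext i
    apply Subtype.ext
    rfl

lemma card_bases (k : ℕ) (U : Submodule K V) (hU : finrank K U = k) :
    Nat.card {s : Fin k → V // LinearIndependent K s ∧ Submodule.span K (Set.range s) = U}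
      = ∏ a ∈ range k, (q ^ k - q ^ a) := by
  rw [Nat.card_congr (basesEquiv k U hU)]
  rw [card_linearIndependent (by rw [hU])]
  rw [hU]
  exact Fin.prod_univ_eq_prod_range (fun a => Fintype.card K ^ k - Fintype.card K ^ a) k

noncomputable def tupleFiberEquiv (k : ℕ) :
    {s : Fin k → V // LinearIndependent K s ∧ TotIso B (Submodule.span K (Set.range s))} ≃
      Σ U : {U : Submodule K V // TotIso B U ∧ finrank K U = k},
        {s : Fin k → V // LinearIndependent K s ∧ Submodule.span K (Set.range s) = U.1} where
  toFun s := ⟨⟨Submodule.span K (Set.range s.1), s.2.2,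
      by rw [finrank_span_eq_card s.2.1, Fintype.card_fin]⟩, ⟨s.1, s.2.1, rfl⟩⟩
  invFun p := ⟨p.2.1, p.2.2.1, by rw [p.2.2.2]; exact p.1.2.1⟩
  left_inv s := rfl
  right_inv := fun ⟨⟨U, hU⟩, ⟨s, hs, hsp⟩⟩ => by
    dsimp only at hsp
    subst hsp
    rfl

lemma card_iso_rank_eq (hnd : B.Nondegenerate) (halt : B.IsAlt) {ν : ℕ}
    (hdim : finrank K V = 2 * ν) (k : ℕ) (hk : k ≤ ν) :
    Nat.card {U : Submodule K V // TotIso B U ∧ finrank K U = k}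
        * ∏ a ∈ range k, (q ^ k - q ^ a)
      = ∏ a ∈ range k, (q ^ (2 * ν - a) - q ^ a) := by
  rw [← card_isoTuples B hnd halt hdim k hk, Nat.card_congr (tupleFiberEquiv B k)]
  simp only [Nat.card_eq_fintype_card]
  rw [Fintype.card_sigma]
  have hfib : ∀ U : {U : Submodule K V // TotIso B U ∧ finrank K U = k},
      Fintype.card {s : Fin k → V // LinearIndependent K s
          ∧ Submodule.span K (Set.range s) = U.1}
        = ∏ a ∈ range k, (q ^ k - q ^ a) := by
    intro U
    rw [← Nat.card_eq_fintype_card, card_bases k U.1 U.2.2]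
  rw [Finset.sum_congr rfl fun U _ => hfib U, Finset.sum_const, Finset.card_univ,
    smul_eq_mul]

lemma totIso_finrank_le (hnd : B.Nondegenerate) (halt : B.IsAlt) {ν : ℕ}
    (hdim : finrank K V = 2 * ν) {U : Submodule K V} (h : TotIso B U) : finrank K U ≤ ν := by
  have : FiniteDimensional K V := Module.Finite.of_finite
  have hle := (totIso_iff_le_orthogonal B).1 h
  have h1 : finrank K U ≤ finrank K (B.orthogonal U) := Submodule.finrank_mono hle
  have h2 : finrank K (B.orthogonal U) = finrank K V - finrank K U :=
    LinearMap.BilinForm.finrank_orthogonal hnd U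
  have h3 : finrank K U ≤ finrank K V := Submodule.finrank_le U
  omega

theorem card_totIso (hnd : B.Nondegenerate) (halt : B.IsAlt) {ν : ℕ}
    (hdim : finrank K V = 2 * ν) :
    Nat.card {U : Submodule K V // TotIso B U}
      = ∑ k ∈ range (ν + 1), gaussBinom q ν k * ∏ a ∈ range k, (q ^ (ν - a) + 1) := by
  classical
  have : FiniteDimensional K V := Module.Finite.of_finite
  have hq1 : 1 < q := Fintype.one_lt_card
  have hrank : ∀ k, k ≤ ν → Nat.card {U : Submodule K V // TotIso B U ∧ finrank K U = k}
      = gaussBinom q ν k * ∏ a ∈ range k, (q ^ (ν - a) + 1) := by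
    intro k hk
    have hpos : 0 < ∏ a ∈ range k, (q ^ k - q ^ a) := by
      apply Finset.prod_pos
      intro a ha
      have h1 := Finset.mem_range.1 ha
      have h2 : q ^ a < q ^ k := Nat.pow_lt_pow_right hq1 h1
      omega
    apply Nat.eq_of_mul_eq_mul_right hpos
    rw [card_iso_rank_eq B hnd halt hdim k hk, key_identity q ν k (by omega) hk]
  rw [Nat.card_eq_fintype_card, Fintype.card_subtype]
  have hmap : ∀ U ∈ Finset.univ.filter (fun U : Submodule K V => TotIso B U),
      finrank K U ∈ Finset.range (ν + 1) := by
    intro U hU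
    simp only [Finset.mem_filter] at hU
    exact Finset.mem_range.2 (Nat.lt_succ_of_le (totIso_finrank_le B hnd halt hdim hU.2))
  rw [Finset.card_eq_sum_card_fiberwise hmap]
  refine Finset.sum_congr rfl fun k hk => ?_
  rw [← hrank k (Nat.lt_succ_iff.1 (Finset.mem_range.1 hk))]
  rw [Nat.card_eq_fintype_card, Fintype.card_subtype, Finset.filter_filter]

end X

section App
variable (F : Type*) [Field F] (ε : ℕ)

/-- coordinate-sum linear functional -/
def sumFun : (Fin ε → F) →ₗ[F] F where
  toFun x := ∑ i, x i
  map_add' x y := by simp [Finset.sum_add_distrib]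
  map_smul' c x := by simp [Finset.mul_sum]

/-- the dot-product bilinear form -/
def dotForm : LinearMap.BilinForm F (Fin ε → F) :=
  LinearMap.mk₂ F (fun x y => ∑ i, x i * y i)
    (fun x x' y => by simp [add_mul, Finset.sum_add_distrib])
    (fun c x y => by simp [Finset.mul_sum, mul_assoc])
    (fun x y y' => by simp [mul_add, Finset.sum_add_distrib])
    (fun c x y => by simp [Finset.mul_sum]; ring_nf; simp [mul_comm, mul_left_comm])

@[simp] lemma dotForm_apply (x y : Fin ε → F) : dotForm F ε x y = ∑ i, x i * y i := rfl

@[simp] lemma sumFun_apply (x : Fin ε → F) : sumFun F ε x = ∑ i, x i := rfl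

end App

/-- Let `q` be even and `G = F_q^ε` with the (non-degenerate, symmetric) dot product
`[x,y] = Σ_i x_i y_i`, so that `[c,c] = 0` for every `c` in the hyperplane
`{c : Σ_i c_i = 0}`.  If `ε` is odd, then the number of self-orthogonal subspaces of `G`
equals `Σ_{k=0}^{(ε−1)/2} [(ε−1)/2 choose k]_q ∏_{a=0}^{k−1} (q^{(ε−2a−1)/2} + 1)`. -/
theorem selfOrthogonal_count_char_two (F : Type*) [Field F] [Fintype F]
    (q ε : ℕ) (hq : Fintype.card F = q) (hqeven : Even q) (hε : Odd ε)
    (hself : ∀ c : Fin ε → F, (∑ i, c i) = 0 → (∑ i, c i * c i) = 0) :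
    Nat.card {U : Submodule F (Fin ε → F) //
        ∀ x ∈ U, ∀ y ∈ U, (∑ i, x i * y i) = 0}
      = ∑ k ∈ Finset.range ((ε - 1) / 2 + 1),
          gaussBinom q ((ε - 1) / 2) k *
            ∏ a ∈ Finset.range k, (q ^ ((ε - 2 * a - 1) / 2) + 1) := by
  classical
  obtain ⟨m, hm⟩ := hε
  -- characteristic 2
  have hprime := CharP.char_is_prime F (ringChar F)
  obtain ⟨n, hp, hcard⟩ := FiniteField.card F (ringChar F)
  have h2 : ringChar F = 2 := by
    have hdvd : 2 ∣ Fintype.card F := hq ▸ hqeven.two_dvd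
    rw [hcard] at hdvd
    have := Nat.Prime.dvd_of_dvd_pow Nat.prime_two hdvd
    exact ((Nat.prime_dvd_prime_iff_eq Nat.prime_two hp).1 this).symm
  have hchar : CharP F 2 := h2 ▸ ringChar.charP F
  have h2F : (2 : F) = 0 := by
    have := CharP.cast_eq_zero F 2
    exact_mod_cast this
  set W := LinearMap.ker (sumFun F ε) with hW
  set B := (dotForm F ε).restrict W with hB
  have hBval : ∀ x y : W, B x y = ∑ i, (x : Fin ε → F) i * (y : Fin ε → F) i := by
    intro x y
    rfl
  -- dimension of W
  have hεpos : 0 < ε := by omega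
  have hsurj : Function.Surjective (sumFun F ε) := by
    intro c
    refine ⟨Pi.single ⟨0, hεpos⟩ c, ?_⟩
    simp [Finset.sum_pi_single']
  have hdimW : Module.finrank F W = 2 * m := by
    have hrn := LinearMap.finrank_range_add_finrank_ker (sumFun F ε)
    rw [LinearMap.range_eq_top.2 hsurj, finrank_top, Module.finrank_self] at hrn
    have hpi : Module.finrank F (Fin ε → F) = ε := by simp
    rw [hpi] at hrn
    rw [hW]
    omega
  -- alternating
  have halt : B.IsAlt := by
    intro x
    rw [hBval]
    exact hself _ x.2
  -- nondegenerate
  have hnd : B.Nondegenerate := by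
    refine (LinearMap.IsRefl.nondegenerate_iff_separatingLeft halt.isRefl).2 ?_
    intro x hx
    have hconst : ∀ i j : Fin ε, (x : Fin ε → F) i = (x : Fin ε → F) j := by
      intro i j
      have hyW : Pi.single i (1:F) - Pi.single j 1 ∈ W := by
        simp [hW, LinearMap.mem_ker, Finset.sum_sub_distrib, Finset.sum_pi_single']
      have h0 := hx ⟨_, hyW⟩
      rw [hBval] at h0
      simp only [Pi.sub_apply, Pi.single_apply, mul_sub, mul_ite, mul_one, mul_zero,
        Finset.sum_sub_distrib, Finset.sum_ite_eq', Finset.mem_univ, if_true] at h0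
      exact sub_eq_zero.1 h0
    apply Subtype.ext
    funext j
    have hsum : ∑ i, (x : Fin ε → F) i = 0 := x.2
    have hconstj : ∀ i, (x : Fin ε → F) i = (x : Fin ε → F) j := fun i => hconst i j
    rw [Finset.sum_congr rfl fun i _ => hconstj i, Finset.sum_const, Finset.card_univ,
      Fintype.card_fin, nsmul_eq_mul] at hsum
    have hcast : ((ε : ℕ) : F) = 1 := by
      rw [hm]
      push_cast
      rw [h2F]
      ring
    rw [hcast, one_mul] at hsum
    exact hsum
  -- self-orthogonal subspaces lie in W
  have hle : ∀ U : Submodule F (Fin ε → F),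
      (∀ x ∈ U, ∀ y ∈ U, (∑ i, x i * y i) = 0) → U ≤ W := by
    intro U hU x hx
    have h0 : ∑ i, x i * x i = 0 := hU x hx x hx
    have hpow : (∑ i, x i) ^ 2 = ∑ i, (x i) ^ 2 := by
      haveI := hchar
      haveI : ExpChar F 2 := ExpChar.prime Nat.prime_two
      exact sum_pow_char 2 Finset.univ x
    have : (∑ i, x i) ^ 2 = 0 := by
      rw [hpow]
      rw [← h0]
      exact Finset.sum_congr rfl fun i _ => sq (x i) ▸ (pow_two (x i))
    show sumFun F ε x = 0
    rw [sumFun_apply]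
    exact pow_eq_zero_iff (n := 2) (by norm_num) |>.1 this
  -- the equivalence
  have E : {U : Submodule F (Fin ε → F) // ∀ x ∈ U, ∀ y ∈ U, (∑ i, x i * y i) = 0}
      ≃ {U' : Submodule F W // TotIso B U'} :=
    { toFun := fun U => ⟨U.1.comap W.subtype, by
        intro x hx y hy
        rw [hBval]
        exact U.2 x.1 hx y.1 hy⟩
      invFun := fun U' => ⟨U'.1.map W.subtype, by
        rintro x ⟨x', hx', rfl⟩ y ⟨y', hy', rfl⟩
        have := U'.2 x' hx' y' hy'
        rw [hBval] at this
        exact this⟩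
      left_inv := fun U => by
        apply Subtype.ext
        show Submodule.map W.subtype (Submodule.comap W.subtype U.1) = U.1
        rw [Submodule.map_comap_subtype]
        exact inf_eq_right.2 (hle U.1 U.2)
      right_inv := fun U' => Subtype.ext
        (Submodule.comap_map_eq_of_injective (Submodule.injective_subtype W) U'.1) }
  rw [Nat.card_congr E, card_totIso B hnd halt hdimW, hq]
  have hm2 : (ε - 1) / 2 = m := by omega
  rw [hm2]
  refine Finset.sum_congr rfl fun k hk => ?_
  congr 1
  refine Finset.prod_congr rfl fun a ha => ?_
  congr 2
  omega
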